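/- Let c > 0, let (r_n) satisfy 0 ≤ r_n < 1 and n·r_n = c + O(n^{-1}), and let α be a complex number with Re(α) > 0. With p_n(·) and F_{k+1,n}(·) as in the context, define for m_0 − 1 ≤ k ≤ n − 1 the quantity G_{k,n} := (1−α)·(p_n(α)/p_k(c^{-1}))·∑_{l=k+1}^n [r_l c^{-1}/(1 − r_l c^{-1})]·p_l(c^{-1})/p_l(α). Then: (a) if cα ≠ 1, G_{k,n} = ((1−α)/(cα−1))·(F_{k+1,n}(c^{-1}) − F_{k+1,n}(α)) exactly; (b) if cα = 1, then G_{k,n} = (1 − c^{-1})·F_{k+1,n}(c^{-1})·ln(n/k) + O(n^{-1}), with the O(n^{-1}) uniform over m_0 − 1 ≤ k ≤ n − 1. -/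

import Mathlib

open Filter Topology

noncomputable section

/-- `p_n(x) = ∏_{m=m₀}^n (1 - x r_m)` (so that `p_{m₀-1}(x) = 1`, the empty product).
The quotient `p_n(x)/p_k(x)` is the paper's `F_{k+1,n}(x)`. -/
def pprod (r : ℕ → ℝ) (m0 : ℕ) (x : ℂ) (n : ℕ) : ℂ :=
  ∏ m ∈ Finset.Icc m0 n, (1 - x * (r m : ℂ))

/-- The quantity `G_{k,n} = (1-α) (p_n(α)/p_k(c⁻¹)) ∑_{l=k+1}^n (r_l c⁻¹/(1-r_l c⁻¹))
p_l(c⁻¹)/p_l(α)` (the entry `[A³¹_{k+1,n}]` of Lemma `lem:terms_in_A_k_n`). -/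
def Gterm (r : ℕ → ℝ) (m0 : ℕ) (c : ℝ) (α : ℂ) (k n : ℕ) : ℂ :=
  (1 - α) * (pprod r m0 α n / pprod r m0 ((c⁻¹ : ℝ) : ℂ) k) *
    ∑ l ∈ Finset.Icc (k + 1) n,
      ((r l * c⁻¹ : ℝ) : ℂ) / (1 - ((r l * c⁻¹ : ℝ) : ℂ)) *
        (pprod r m0 ((c⁻¹ : ℝ) : ℂ) l / pprod r m0 α l)

open Finset

lemma sum_sq_le (k : ℕ) (hk : 1 ≤ k) : ∀ n, k ≤ n →
    ∑ l ∈ Icc (k+1) n, ((l:ℝ)^2)⁻¹ ≤ (k:ℝ)⁻¹ - (n:ℝ)⁻¹ := by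
  intro n
  induction n with
  | zero => omega
  | succ n ih =>
      intro hn
      rcases Nat.lt_or_ge k (n+1) with h | h
      · have hkn : k ≤ n := by omega
        rw [Finset.sum_Icc_succ_top (by omega : k + 1 ≤ n + 1)]
        have h1 : (1:ℝ) ≤ n := by exact_mod_cast Nat.one_le_iff_ne_zero.mpr (by omega)
        have key : (((n:ℝ)+1)^2)⁻¹ ≤ (n:ℝ)⁻¹ - ((n:ℝ)+1)⁻¹ := by
          have heq : (n:ℝ)⁻¹ - ((n:ℝ)+1)⁻¹ = ((n:ℝ)*((n:ℝ)+1))⁻¹ := by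
            rw [inv_sub_inv (by positivity) (by positivity)]
            ring_nf
          rw [heq]
          apply inv_anti₀ (by positivity)
          nlinarith
        calc ∑ l ∈ Icc (k+1) n, ((l:ℝ)^2)⁻¹ + (((n+1:ℕ):ℝ)^2)⁻¹
            ≤ ((k:ℝ)⁻¹ - (n:ℝ)⁻¹) + ((n:ℝ)⁻¹ - ((n:ℝ)+1)⁻¹) := by
              push_cast
              exact add_le_add (ih hkn) key
          _ = (k:ℝ)⁻¹ - (((n+1:ℕ):ℝ))⁻¹ := by push_cast; ring
      · have : k = n + 1 := by omega
        subst this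
        simp

lemma sum_log_teles (k : ℕ) (hk : 1 ≤ k) : ∀ n, k ≤ n →
    ∑ l ∈ Icc (k+1) n, (Real.log l - Real.log ((l:ℝ)-1)) = Real.log n - Real.log k := by
  intro n
  induction n with
  | zero => omega
  | succ n ih =>
      intro hn
      rcases Nat.lt_or_ge k (n+1) with h | h
      · have hkn : k ≤ n := by omega
        rw [Finset.sum_Icc_succ_top (by omega : k + 1 ≤ n + 1), ih hkn]
        push_cast
        ring
      · have : k = n + 1 := by omega
        subst this
        simp

lemma prod_one_sub_inv (K : ℕ) (hK : 2 ≤ K) : ∀ n, K - 1 ≤ n →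
    ∏ m ∈ Icc K n, (1 - ((m:ℝ))⁻¹) = ((K:ℝ)-1)/n := by
  intro n
  induction n with
  | zero => omega
  | succ n ih =>
      intro hn
      rcases Nat.lt_or_ge (K-1) (n+1) with h | h
      · have hkn : K - 1 ≤ n := by omega
        have hK1 : K ≤ n + 1 := by omega
        have hn0 : (0:ℝ) < n := by
          have : 1 ≤ n := by omega
          exact_mod_cast Nat.lt_of_lt_of_le Nat.zero_lt_one this
        rw [Finset.prod_Icc_succ_top hK1, ih hkn]
        have : (1:ℝ) - ((n:ℝ)+1)⁻¹ = (n:ℝ)/((n:ℝ)+1) := by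
          field_simp
          ring
        push_cast
        rw [this]
        field_simp
      · have : K = n + 2 := by omega
        subst this
        have : ¬ (n + 2 ≤ n + 1) := by omega
        rw [Finset.Icc_eq_empty this, Finset.prod_empty]
        push_cast
        rw [eq_comm, div_eq_one_iff_eq (by positivity)]
        ring

lemma prod_exp_bound (a : ℝ) (ha : 0 ≤ a) (K : ℕ) (hK : 2 ≤ K) (n : ℕ) :
    ∏ m ∈ Icc K n, (1 + a/((m:ℝ))^2) ≤ Real.exp a := by
  calc ∏ m ∈ Icc K n, (1 + a/((m:ℝ))^2)
      ≤ ∏ m ∈ Icc K n, Real.exp (a/((m:ℝ))^2) := by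
        apply Finset.prod_le_prod
        · intro m hm; positivity
        · intro m hm; exact Real.add_one_le_exp _ |>.trans_eq (by ring) |> fun h => by
            linarith [Real.add_one_le_exp (a/((m:ℝ))^2)]
    _ = Real.exp (∑ m ∈ Icc K n, a/((m:ℝ))^2) := (Real.exp_sum _ _).symm
    _ ≤ Real.exp a := by
        apply Real.exp_le_exp.mpr
        rcases Nat.lt_or_ge n K with h | h
        · rw [Finset.Icc_eq_empty (by omega)]
          simpa using ha
        · have h1 : (1:ℕ) ≤ K - 1 := by omega
          have h2 : K - 1 ≤ n := by omega
          have := sum_sq_le (K-1) h1 n h2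
          have hKm : K - 1 + 1 = K := by omega
          rw [hKm] at this
          have hsum : ∑ m ∈ Icc K n, a/((m:ℝ))^2 = a * ∑ m ∈ Icc K n, ((m:ℝ)^2)⁻¹ := by
            rw [Finset.mul_sum]
            apply Finset.sum_congr rfl
            intro m hm
            rw [div_eq_mul_inv]
          rw [hsum]
          have hK1 : (1:ℝ) ≤ ((K:ℝ)-1) := by
            have : (2:ℝ) ≤ K := by exact_mod_cast hK
            linarith
          have hinv : ((K-1:ℕ):ℝ)⁻¹ ≤ 1 := by
            rw [inv_le_one_iff₀]
            right
            push_cast [Nat.cast_sub (by omega : 1 ≤ K)]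
            linarith
          have hnn : (0:ℝ) ≤ (n:ℝ)⁻¹ := by positivity
          nlinarith [this]

lemma log_diff_bound (l : ℕ) (hl : 2 ≤ l) :
    |Real.log l - Real.log ((l:ℝ)-1) - (l:ℝ)⁻¹| ≤ 2/(l:ℝ)^2 := by
  have hy : (2:ℝ) ≤ (l:ℝ) := by exact_mod_cast hl
  set y : ℝ := (l:ℝ) with hy'
  have h1 : (0:ℝ) < y - 1 := by linarith
  have h0 : (0:ℝ) < y := by linarith
  have hup : Real.log y - Real.log (y-1) ≤ (y-1)⁻¹ := by
    rw [← Real.log_div (by positivity) (by positivity)]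
    have := Real.log_le_sub_one_of_pos (show (0:ℝ) < y/(y-1) by positivity)
    have heq : y/(y-1) - 1 = (y-1)⁻¹ := by field_simp; ring
    linarith
  have hlo : y⁻¹ ≤ Real.log y - Real.log (y-1) := by
    have := Real.log_le_sub_one_of_pos (show (0:ℝ) < (y-1)/y by positivity)
    rw [Real.log_div (by positivity) (by positivity)] at this
    have heq : (y-1)/y - 1 = -y⁻¹ := by field_simp; ring
    linarith
  rw [abs_le]
  constructor
  · have : (0:ℝ) ≤ 2/y^2 := by positivity
    linarith
  · have hgap : (y-1)⁻¹ - y⁻¹ ≤ 2/y^2 := by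
      rw [inv_sub_inv (by positivity) (by positivity)]
      rw [div_le_div_iff₀ (by positivity) (by positivity)]
      nlinarith
    linarith

lemma per_term (A₁ : ℝ) (hA : 0 ≤ A₁) (x : ℝ) (hx0 : 0 ≤ x) (l : ℕ) (hl4 : 4 ≤ l)
    (hxl : |x - (l:ℝ)⁻¹| ≤ A₁/(l:ℝ)^2) (hA1l : A₁ ≤ l) :
    |x/(1-x) - (Real.log l - Real.log ((l:ℝ)-1))| ≤ (A₁+10)/(l:ℝ)^2 := by
  have hy : (4:ℝ) ≤ (l:ℝ) := by exact_mod_cast hl4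
  set y : ℝ := (l:ℝ) with hy'
  have h0 : (0:ℝ) < y := by linarith
  have hxup : x ≤ 2/y := by
    have h1 := (abs_le.mp hxl).2
    have : A₁/y^2 ≤ 1/y := by
      rw [div_le_div_iff₀ (by positivity) (by positivity)]
      nlinarith
    have h5 : x ≤ y⁻¹ + 1/y := by linarith
    have h6 : y⁻¹ + 1/y = 2/y := by rw [inv_eq_one_div]; ring
    linarith
  have hxhalf : x ≤ 1/2 := by
    have : 2/y ≤ 1/2 := by
      rw [div_le_div_iff₀ (by positivity) (by norm_num)]
      linarith
    linarith
  have h1x : (1:ℝ)/2 ≤ 1 - x := by linarith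
  have h1x0 : (0:ℝ) < 1 - x := by linarith
  have d1 : |x/(1-x) - x| ≤ 8/y^2 := by
    have heq : x/(1-x) - x = x^2/(1-x) := by field_simp; ring
    rw [heq, abs_of_nonneg (by positivity)]
    have h2 : x^2/(1-x) ≤ 2*x^2 := by
      rw [div_le_iff₀ h1x0]
      nlinarith
    have h3 : x^2 ≤ (2/y)^2 := by nlinarith
    have h4 : (2/y)^2 = 4/y^2 := by rw [div_pow]; norm_num
    have h5 : (2:ℝ)*(4/y^2) = 8/y^2 := by ring
    linarith
  have d3 := log_diff_bound l (by omega)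
  rw [← hy'] at d3
  have tri : |x/(1-x) - (Real.log y - Real.log (y-1))|
      ≤ |x/(1-x) - x| + |x - y⁻¹| + |Real.log y - Real.log (y-1) - y⁻¹| := by
    have := abs_sub_abs_le_abs_sub (x/(1-x)) x
    calc |x/(1-x) - (Real.log y - Real.log (y-1))|
        = |(x/(1-x) - x) + (x - y⁻¹) + (y⁻¹ - (Real.log y - Real.log (y-1)))| := by ring_nf
      _ ≤ _ := by
          have h1 := abs_add_le (x/(1-x) - x + (x - y⁻¹)) (y⁻¹ - (Real.log y - Real.log (y-1)))
          have h2 := abs_add_le (x/(1-x) - x) (x - y⁻¹)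
          have h3 : |y⁻¹ - (Real.log y - Real.log (y-1))|
              = |Real.log y - Real.log (y-1) - y⁻¹| := abs_sub_comm _ _
          linarith
  have hsum : 8/y^2 + A₁/y^2 + 2/y^2 = (A₁+10)/y^2 := by ring
  linarith [tri, d1, d3, hxl]

lemma prod_bound (x : ℕ → ℝ) (A₁ : ℝ) (hA : 0 ≤ A₁) (K : ℕ) (hK : 2 ≤ K)
    (h1 : ∀ m, K ≤ m → 0 ≤ 1 - x m)
    (h2 : ∀ m, K ≤ m → 1 - x m ≤ (1 - (m:ℝ)⁻¹)*(1 + 2*A₁/(m:ℝ)^2))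
    (n : ℕ) (hn : K - 1 ≤ n) :
    ∏ m ∈ Icc K n, (1 - x m) ≤ (((K:ℝ)-1)/n) * Real.exp (2*A₁) := by
  calc ∏ m ∈ Icc K n, (1 - x m)
      ≤ ∏ m ∈ Icc K n, (1 - (m:ℝ)⁻¹)*(1 + 2*A₁/(m:ℝ)^2) := by
        apply Finset.prod_le_prod
        · intro m hm; exact h1 m (Finset.mem_Icc.mp hm).1
        · intro m hm; exact h2 m (Finset.mem_Icc.mp hm).1
    _ = (∏ m ∈ Icc K n, (1 - (m:ℝ)⁻¹)) * ∏ m ∈ Icc K n, (1 + 2*A₁/(m:ℝ)^2) :=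
        Finset.prod_mul_distrib
    _ ≤ (((K:ℝ)-1)/n) * Real.exp (2*A₁) := by
        rw [prod_one_sub_inv K hK n hn]
        apply mul_le_mul_of_nonneg_left (prod_exp_bound (2*A₁) (by linarith) K hK n)
        have hK1 : (1:ℝ) ≤ (K:ℝ) := by exact_mod_cast Nat.one_le_of_lt hK
        exact div_nonneg (by linarith) (by positivity)

set_option maxHeartbeats 2000000 in
open Filter in
lemma real_main (c : ℝ) (hc : 0 < c) (r : ℕ → ℝ) (hr0 : ∀ n, 0 ≤ r n)
    (hrO : (fun n : ℕ => (n : ℝ) * r n - c) =O[Filter.atTop] fun n : ℕ => (n : ℝ)⁻¹)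
    (m0 : ℕ) (hm0 : 2 ≤ m0) (hx1 : ∀ m, m0 ≤ m → c⁻¹ * r m < 1) :
    ∃ C : ℝ, ∀ᶠ n : ℕ in Filter.atTop, ∀ k : ℕ, m0 - 1 ≤ k → k + 1 ≤ n →
      |(1 - c⁻¹) * ((∏ m ∈ Icc m0 n, (1 - c⁻¹ * r m)) / (∏ m ∈ Icc m0 k, (1 - c⁻¹ * r m))) *
        ((∑ l ∈ Icc (k+1) n, (c⁻¹ * r l)/(1 - c⁻¹ * r l)) - Real.log ((n:ℝ)/k))| ≤ C / n := by
  -- extract big-O data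
  obtain ⟨A₀', hA₀'⟩ := Asymptotics.isBigO_iff.mp hrO
  obtain ⟨N, hN⟩ := eventually_atTop.mp hA₀'
  set A₀ : ℝ := max A₀' 0 with hA₀def
  have hA₀nn : 0 ≤ A₀ := le_max_right _ _
  have hN' : ∀ l : ℕ, N ≤ l → 1 ≤ l → |(l:ℝ) * r l - c| ≤ A₀ / l := by
    intro l hl hl1
    have := hN l hl
    have hl0 : (0:ℝ) < l := by exact_mod_cast hl1
    rw [Real.norm_eq_abs, Real.norm_eq_abs, abs_inv, abs_of_pos hl0] at this
    calc |(l:ℝ) * r l - c| ≤ A₀' * (l:ℝ)⁻¹ := this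
      _ ≤ A₀ * (l:ℝ)⁻¹ := by
          apply mul_le_mul_of_nonneg_right (le_max_left _ _) (by positivity)
      _ = A₀ / l := by rw [div_eq_mul_inv]
  set A₁ : ℝ := A₀ / c with hA₁def
  have hA₁nn : 0 ≤ A₁ := div_nonneg hA₀nn hc.le
  set L : ℕ := max (max N m0) (max 4 (⌈A₁⌉₊ + 1)) with hLdef
  have hL4 : 4 ≤ L := le_trans (le_max_left _ _) (le_max_right _ _)
  have hLN : N ≤ L := le_trans (le_max_left _ _) (le_max_left _ _)
  have hLm0 : m0 ≤ L := le_trans (le_max_right _ _) (le_max_left _ _)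
  have hLA₁ : A₁ ≤ (L:ℝ) := by
    have h1 : (⌈A₁⌉₊ : ℝ) ≤ L := by
      have : ⌈A₁⌉₊ + 1 ≤ L := le_trans (le_max_right _ _) (le_max_right _ _)
      exact_mod_cast Nat.le_of_succ_le this
    linarith [Nat.le_ceil A₁]
  -- per-index bound on x l := c⁻¹ * r l
  have hxl : ∀ l : ℕ, L ≤ l → |c⁻¹ * r l - (l:ℝ)⁻¹| ≤ A₁/(l:ℝ)^2 := by
    intro l hl
    have hl1 : 1 ≤ l := by omega
    have hl0 : (0:ℝ) < l := by exact_mod_cast hl1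
    have h1 := hN' l (le_trans hLN hl) hl1
    have heq : c⁻¹ * r l - (l:ℝ)⁻¹ = ((l:ℝ) * r l - c) / (c * l) := by
      field_simp
    rw [heq, abs_div, abs_of_pos (by positivity : (0:ℝ) < c * l)]
    rw [div_le_div_iff₀ (by positivity) (by positivity)]
    calc |(l:ℝ) * r l - c| * (l:ℝ)^2 ≤ (A₀/l) * (l:ℝ)^2 := by
          apply mul_le_mul_of_nonneg_right h1 (by positivity)
      _ = A₁ * (c * l) := by rw [hA₁def]; field_simp
  -- positivity of factors
  have hfac : ∀ m : ℕ, m0 ≤ m → 0 < 1 - c⁻¹ * r m := fun m hm => by linarith [hx1 m hm]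
  have hfac1 : ∀ m : ℕ, m0 ≤ m → 1 - c⁻¹ * r m ≤ 1 := fun m hm => by
    have h1 : 0 ≤ c⁻¹ * r m := mul_nonneg (by positivity) (hr0 m)
    linarith
  -- the error terms
  set e : ℕ → ℝ := fun l => |(c⁻¹ * r l)/(1 - c⁻¹ * r l)
      - (Real.log l - Real.log ((l:ℝ)-1))| with hedef
  have he0 : ∀ l, 0 ≤ e l := fun l => abs_nonneg _
  set B : ℝ := A₁ + 10 with hBdef
  have hB0 : (0:ℝ) < B := by rw [hBdef]; linarith
  have hper : ∀ l : ℕ, L ≤ l → e l ≤ B/(l:ℝ)^2 := by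
    intro l hl
    have hl0 : (0:ℝ) < l := by
      have : (4:ℕ) ≤ l := le_trans hL4 hl
      exact_mod_cast Nat.lt_of_lt_of_le (by norm_num) this
    exact per_term A₁ hA₁nn (c⁻¹ * r l) (mul_nonneg (by positivity) (hr0 l))
      l (le_trans hL4 hl) (hxl l hl)
      (le_trans hLA₁ (by exact_mod_cast hl))
  set M : ℝ := ∑ l ∈ Icc m0 L, e l with hMdef
  have hM0 : 0 ≤ M := Finset.sum_nonneg fun l _ => he0 l
  set D : ℝ := (L:ℝ) * Real.exp (2*A₁) with hDdef
  have hL0 : (0:ℝ) < L := by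
    have : (4:ℕ) ≤ L := hL4
    exact_mod_cast Nat.lt_of_lt_of_le (by norm_num) this
  have hD0 : (0:ℝ) < D := by positivity
  refine ⟨|1 - c⁻¹| * D * (B + L*(M+B)), eventually_atTop.mpr ⟨L + 1, ?_⟩⟩
  intro n hn k hk hkn
  have hk1 : 1 ≤ k := by omega
  have hk0 : (0:ℝ) < k := by exact_mod_cast hk1
  have hn0 : (0:ℝ) < n := by
    have : 1 ≤ n := by omega
    exact_mod_cast this
  have hm0k : m0 ≤ k + 1 := by omega
  -- products
  have hQk : 0 < ∏ m ∈ Icc m0 k, (1 - c⁻¹ * r m) :=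
    Finset.prod_pos fun m hm => hfac m (Finset.mem_Icc.mp hm).1
  have hsplit : (∏ m ∈ Icc m0 k, (1 - c⁻¹ * r m)) * ∏ m ∈ Ioc k n, (1 - c⁻¹ * r m)
      = ∏ m ∈ Icc m0 n, (1 - c⁻¹ * r m) := by
    have h1 : Icc m0 k = Ioc (m0 - 1) k := by
      rw [← Finset.Icc_add_one_left_eq_Ioc]
      congr 1
      omega
    have h2 : Icc m0 n = Ioc (m0 - 1) n := by
      rw [← Finset.Icc_add_one_left_eq_Ioc]
      congr 1
      omega
    rw [h1, h2]
    exact Finset.prod_Ioc_consecutive _ (by omega) (by omega)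
  have hratio : (∏ m ∈ Icc m0 n, (1 - c⁻¹ * r m)) / (∏ m ∈ Icc m0 k, (1 - c⁻¹ * r m))
      = ∏ m ∈ Ioc k n, (1 - c⁻¹ * r m) := by
    rw [← hsplit, mul_comm, mul_div_assoc, div_self (ne_of_gt hQk), mul_one]

  -- bound on the product ratio
  set K : ℕ := max (k+1) L with hKdef
  have hKL : L ≤ K := le_max_right _ _
  have hKk : k + 1 ≤ K := le_max_left _ _
  have hK2 : 2 ≤ K := le_trans (by norm_num) (le_trans hL4 hKL)
  have hKn : K ≤ n := max_le hkn (by omega)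
  have hprod1 : ∏ m ∈ Ioc k n, (1 - c⁻¹ * r m) ≤ ∏ m ∈ Icc K n, (1 - c⁻¹ * r m) := by
    have hsp : (∏ m ∈ Ioc k (K-1), (1 - c⁻¹ * r m)) * ∏ m ∈ Ioc (K-1) n, (1 - c⁻¹ * r m)
        = ∏ m ∈ Ioc k n, (1 - c⁻¹ * r m) :=
      Finset.prod_Ioc_consecutive _ (by omega) (by omega)
    have hIcc : Icc K n = Ioc (K-1) n := by
      rw [← Finset.Icc_add_one_left_eq_Ioc]
      congr 1
      omega
    rw [hIcc, ← hsp]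
    have hmem : ∀ m ∈ Ioc k (K-1), m0 ≤ m := fun m hm => by
      have := (Finset.mem_Ioc.mp hm).1
      omega
    have h1 : ∏ m ∈ Ioc k (K-1), (1 - c⁻¹ * r m) ≤ 1 :=
      Finset.prod_le_one (fun m hm => (hfac m (hmem m hm)).le)
        (fun m hm => hfac1 m (hmem m hm))
    have h2 : 0 ≤ ∏ m ∈ Ioc (K-1) n, (1 - c⁻¹ * r m) :=
      Finset.prod_nonneg fun m hm => by
        have := (Finset.mem_Ioc.mp hm).1
        exact (hfac m (by omega)).le
    exact mul_le_of_le_one_left h2 h1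
  have hprod2 : ∏ m ∈ Icc K n, (1 - c⁻¹ * r m) ≤ (((K:ℝ)-1)/n) * Real.exp (2*A₁) := by
    apply prod_bound (fun m => c⁻¹ * r m) A₁ hA₁nn K hK2
    · intro m hmK
      exact (hfac m (by omega)).le
    · intro m hmK
      have hmL : L ≤ m := le_trans hKL hmK
      have hy : (4:ℝ) ≤ (m:ℝ) := by exact_mod_cast le_trans hL4 hmL
      have hy0 : (0:ℝ) < (m:ℝ) := by linarith
      have hx := (abs_le.mp (hxl m hmL)).1
      have hexp : (1 - ((m:ℝ))⁻¹)*(1 + 2*A₁/(m:ℝ)^2)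
          = 1 - ((m:ℝ))⁻¹ + 2*A₁/(m:ℝ)^2 - 2*A₁/(m:ℝ)^3 := by
        field_simp
        ring
      have hsm : 2*A₁/(m:ℝ)^3 ≤ A₁/(m:ℝ)^2 := by
        rw [div_le_div_iff₀ (by positivity) (by positivity)]
        nlinarith [mul_nonneg (mul_nonneg hA₁nn (sq_nonneg ((m:ℝ)))) (by linarith : (0:ℝ) ≤ (m:ℝ) - 2)]
      rw [hexp]
      have e1 : 2*A₁/(m:ℝ)^2 - 2*A₁/(m:ℝ)^3 - A₁/(m:ℝ)^2
          = A₁/(m:ℝ)^2 - 2*A₁/(m:ℝ)^3 := by ring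
      linarith [hx, hsm, e1]
    · omega
  have hKLk : ((K:ℝ) - 1) ≤ (L:ℝ) * k := by
    have : K - 1 ≤ L * k := by
      rcases le_or_gt L (k+1) with h | h
      · have : K = k + 1 := by omega
        rw [this]
        have := Nat.le_mul_of_pos_left k (show 0 < L by omega)
        omega
      · have : K = L := by omega
        rw [this]
        have := Nat.le_mul_of_pos_right L (show 0 < k by omega)
        omega
    calc ((K:ℝ) - 1) ≤ ((K - 1 : ℕ) : ℝ) := by
          push_cast [Nat.cast_sub (by omega : 1 ≤ K)]
          linarith
      _ ≤ ((L * k : ℕ) : ℝ) := by exact_mod_cast this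
      _ = (L:ℝ) * k := by push_cast; ring
  have hratio_le : ∏ m ∈ Ioc k n, (1 - c⁻¹ * r m) ≤ D * k / n := by
    calc ∏ m ∈ Ioc k n, (1 - c⁻¹ * r m) ≤ (((K:ℝ)-1)/n) * Real.exp (2*A₁) :=
          le_trans hprod1 hprod2
      _ ≤ (((L:ℝ)*k)/n) * Real.exp (2*A₁) := by
          apply mul_le_mul_of_nonneg_right _ (Real.exp_nonneg _)
          gcongr
      _ = D * k / n := by rw [hDdef]; ring
  -- telescoping log sum
  have htel : ∑ l ∈ Icc (k+1) n, (Real.log l - Real.log ((l:ℝ)-1)) = Real.log ((n:ℝ)/k) := by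
    rw [sum_log_teles k hk1 n (by omega), Real.log_div hn0.ne' hk0.ne']
  have herr : |(∑ l ∈ Icc (k+1) n, (c⁻¹ * r l)/(1 - c⁻¹ * r l)) - Real.log ((n:ℝ)/k)|
      ≤ ∑ l ∈ Icc (k+1) n, e l := by
    rw [← htel, ← Finset.sum_sub_distrib]
    exact Finset.abs_sum_le_sum_abs _ _
  -- rewrite goal
  rw [abs_mul, abs_mul]
  have hR0 : 0 ≤ ∏ m ∈ Ioc k n, (1 - c⁻¹ * r m) :=
    Finset.prod_nonneg fun m hm => by
      have := (Finset.mem_Ioc.mp hm).1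
      exact (hfac m (by omega)).le
  rw [hratio, abs_of_nonneg hR0]
  set R : ℝ := ∏ m ∈ Ioc k n, (1 - c⁻¹ * r m) with hRdef
  have hC1 : 0 ≤ |1 - c⁻¹| := abs_nonneg _
  rcases le_or_gt L k with hcase | hcase
  · -- large k
    have hsum : ∑ l ∈ Icc (k+1) n, e l ≤ B / k := by
      calc ∑ l ∈ Icc (k+1) n, e l ≤ ∑ l ∈ Icc (k+1) n, B/(l:ℝ)^2 :=
            Finset.sum_le_sum fun l hl => hper l (by
              have := (Finset.mem_Icc.mp hl).1
              omega)
        _ = B * ∑ l ∈ Icc (k+1) n, ((l:ℝ)^2)⁻¹ := by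
            rw [Finset.mul_sum]
            exact Finset.sum_congr rfl fun l _ => div_eq_mul_inv _ _
        _ ≤ B * ((k:ℝ)⁻¹ - (n:ℝ)⁻¹) :=
            mul_le_mul_of_nonneg_left (sum_sq_le k hk1 n (by omega)) hB0.le
        _ ≤ B / k := by
            rw [div_eq_mul_inv]
            have : (0:ℝ) ≤ (n:ℝ)⁻¹ := by positivity
            nlinarith
    have hmain : |1 - c⁻¹| * R * |(∑ l ∈ Icc (k+1) n, (c⁻¹ * r l)/(1 - c⁻¹ * r l))
        - Real.log ((n:ℝ)/k)| ≤ |1 - c⁻¹| * ((D * k / n) * (B / k)) := by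
      rw [mul_assoc]
      apply mul_le_mul_of_nonneg_left _ hC1
      exact mul_le_mul hratio_le (le_trans herr hsum) (abs_nonneg _)
        (by positivity)
    have heq2 : |1 - c⁻¹| * ((D * k / n) * (B / k)) = (|1 - c⁻¹| * (D * B)) / n := by
      field_simp
    have hCle : |1 - c⁻¹| * (D * B) ≤ |1 - c⁻¹| * D * (B + L*(M+B)) := by
      have h1 : 0 ≤ (L:ℝ)*(M+B) := by positivity
      have h2 : 0 ≤ |1 - c⁻¹| * D := by positivity
      nlinarith [mul_nonneg h2 h1]
    calc |1 - c⁻¹| * R * |(∑ l ∈ Icc (k+1) n, (c⁻¹ * r l)/(1 - c⁻¹ * r l))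
          - Real.log ((n:ℝ)/k)| ≤ (|1 - c⁻¹| * (D * B)) / n := by rw [← heq2]; exact hmain
      _ ≤ (|1 - c⁻¹| * D * (B + L*(M+B))) / n := by gcongr
  · -- small k
    have hsum : ∑ l ∈ Icc (k+1) n, e l ≤ M + B := by
      have hIoc : Icc (k+1) n = Ioc k n := by rw [Finset.Icc_add_one_left_eq_Ioc]
      have hIoc2 : Icc (L+1) n = Ioc L n := by rw [Finset.Icc_add_one_left_eq_Ioc]
      have hsp : (∑ l ∈ Ioc k L, e l) + ∑ l ∈ Ioc L n, e l = ∑ l ∈ Ioc k n, e l :=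
        Finset.sum_Ioc_consecutive _ (by omega) (by omega)
      rw [hIoc, ← hsp]
      have h1 : ∑ l ∈ Ioc k L, e l ≤ M := by
        apply Finset.sum_le_sum_of_subset_of_nonneg
        · intro m hm
          rw [Finset.mem_Ioc] at hm
          rw [Finset.mem_Icc]
          omega
        · intro m _ _
          exact he0 m
      have h2 : ∑ l ∈ Ioc L n, e l ≤ B := by
        have hL1 : 1 ≤ L := by omega
        calc ∑ l ∈ Ioc L n, e l = ∑ l ∈ Icc (L+1) n, e l := by rw [hIoc2]
          _ ≤ ∑ l ∈ Icc (L+1) n, B/(l:ℝ)^2 :=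
              Finset.sum_le_sum fun l hl => hper l (by
                have := (Finset.mem_Icc.mp hl).1
                omega)
          _ = B * ∑ l ∈ Icc (L+1) n, ((l:ℝ)^2)⁻¹ := by
              rw [Finset.mul_sum]
              exact Finset.sum_congr rfl fun l _ => div_eq_mul_inv _ _
          _ ≤ B * ((L:ℝ)⁻¹ - (n:ℝ)⁻¹) :=
              mul_le_mul_of_nonneg_left (sum_sq_le L hL1 n (by omega)) hB0.le
          _ ≤ B := by
              have h3 : (0:ℝ) ≤ (n:ℝ)⁻¹ := by positivity
              have h4 : (L:ℝ)⁻¹ ≤ 1 := by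
                rw [inv_le_one_iff₀]
                right
                exact_mod_cast Nat.one_le_iff_ne_zero.mpr (by omega)
              nlinarith
      linarith
    have hkL : (k:ℝ) ≤ (L:ℝ) := by exact_mod_cast hcase.le
    have hmain : |1 - c⁻¹| * R * |(∑ l ∈ Icc (k+1) n, (c⁻¹ * r l)/(1 - c⁻¹ * r l))
        - Real.log ((n:ℝ)/k)| ≤ |1 - c⁻¹| * ((D * k / n) * (M + B)) := by
      rw [mul_assoc]
      apply mul_le_mul_of_nonneg_left _ hC1
      exact mul_le_mul hratio_le (le_trans herr hsum) (abs_nonneg _) (by positivity)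
    have heq2 : |1 - c⁻¹| * ((D * L / n) * (M + B)) = (|1 - c⁻¹| * D * (L*(M+B))) / n := by
      field_simp
    have hmono : |1 - c⁻¹| * ((D * k / n) * (M + B)) ≤ |1 - c⁻¹| * ((D * L / n) * (M + B)) := by
      have : D * k / n ≤ D * L / n := by gcongr
      have hMB : (0:ℝ) ≤ M + B := by linarith
      apply mul_le_mul_of_nonneg_left _ hC1
      exact mul_le_mul_of_nonneg_right this hMB
    have hCle : |1 - c⁻¹| * D * (L*(M+B)) ≤ |1 - c⁻¹| * D * (B + L*(M+B)) := by
      have h1 : 0 ≤ |1 - c⁻¹| * D := by positivity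
      nlinarith
    calc |1 - c⁻¹| * R * |(∑ l ∈ Icc (k+1) n, (c⁻¹ * r l)/(1 - c⁻¹ * r l))
          - Real.log ((n:ℝ)/k)| ≤ (|1 - c⁻¹| * D * (L*(M+B))) / n := by
            rw [← heq2]
            exact le_trans hmain hmono
      _ ≤ (|1 - c⁻¹| * D * (B + L*(M+B))) / n := by gcongr

lemma pprod_ne_zero (r : ℕ → ℝ) (m0 : ℕ) (x : ℂ) (hx : ∀ m, m0 ≤ m → (1 - x * (r m : ℂ)).re > 0)
    (n : ℕ) : pprod r m0 x n ≠ 0 := by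
  refine Finset.prod_ne_zero_iff.mpr fun m hm => ?_
  have := hx m (Finset.mem_Icc.mp hm).1
  intro h
  rw [h] at this
  simp at this

lemma pprod_succ (r : ℕ → ℝ) (m0 : ℕ) (x : ℂ) (n : ℕ) (h : m0 ≤ n + 1) :
    pprod r m0 x (n + 1) = pprod r m0 x n * (1 - x * (r (n+1) : ℂ)) := by
  unfold pprod
  rw [← Finset.prod_Icc_succ_top h]

lemma keyalg (u v w P Q Pk Qk : ℂ) (hu : 1 - u ≠ 0) (hv : 1 - v ≠ 0) (hQ : Q ≠ 0)
    (hQk : Qk ≠ 0) (hw : w ≠ 0) (huv : v - u = u * w) :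
    w⁻¹ * (P/Q - Pk/Qk) + u/(1-u) * (P*(1-u)/(Q*(1-v)))
      = w⁻¹ * (P*(1-u)/(Q*(1-v)) - Pk/Qk) := by
  field_simp
  linear_combination (-P*Qk) * huv

lemma telescope (r : ℕ → ℝ) (c : ℝ) (hc : (c:ℝ) ≠ 0) (α : ℂ) (hca : (c:ℂ)*α - 1 ≠ 0) (m0 : ℕ)
    (hA : ∀ n, pprod r m0 α n ≠ 0)
    (hx : ∀ l, m0 ≤ l → (1:ℂ) - ((r l * c⁻¹:ℝ):ℂ) ≠ 0)
    (hα1 : ∀ l, m0 ≤ l → (1:ℂ) - α * (r l : ℂ) ≠ 0)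
    (k : ℕ) (hk : m0 ≤ k + 1) : ∀ n, k ≤ n →
    ∑ l ∈ Finset.Icc (k+1) n, ((r l * c⁻¹:ℝ):ℂ)/(1 - ((r l * c⁻¹:ℝ):ℂ)) *
        (pprod r m0 ((c⁻¹:ℝ):ℂ) l / pprod r m0 α l)
    = ((c:ℂ)*α - 1)⁻¹ * (pprod r m0 ((c⁻¹:ℝ):ℂ) n / pprod r m0 α n
        - pprod r m0 ((c⁻¹:ℝ):ℂ) k / pprod r m0 α k) := by
  intro n hn
  induction n with
  | zero =>
      have : k = 0 := Nat.le_zero.mp hn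
      subst this; simp
  | succ n ih =>
      rcases Nat.lt_or_ge k (n+1) with h | h
      · have hkn : k ≤ n := Nat.lt_succ_iff.mp h
        have hm1 : m0 ≤ n + 1 := le_trans hk (by omega)
        rw [Finset.sum_Icc_succ_top (by omega : k + 1 ≤ n + 1), ih hkn,
          pprod_succ r m0 _ n hm1, pprod_succ r m0 α n hm1]
        have hcc : (c:ℂ) ≠ 0 := Complex.ofReal_ne_zero.mpr hc
        have hcast : ((r (n+1) * c⁻¹ : ℝ):ℂ) = ((c⁻¹:ℝ):ℂ) * ((r (n+1)):ℂ) := by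
          push_cast; ring
        rw [hcast]
        have hu : (1:ℂ) - ((c⁻¹:ℝ):ℂ) * ((r (n+1)):ℂ) ≠ 0 := by
          rw [← hcast]; exact hx _ hm1
        have huv : α * (r (n+1) : ℂ) - ((c⁻¹:ℝ):ℂ) * ((r (n+1)):ℂ)
            = ((c⁻¹:ℝ):ℂ) * ((r (n+1)):ℂ) * ((c:ℂ)*α - 1) := by
          push_cast
          field_simp
        exact keyalg (((c⁻¹:ℝ):ℂ) * ((r (n+1)):ℂ)) (α * ((r (n+1)):ℂ)) ((c:ℂ)*α - 1)
          (pprod r m0 ((c⁻¹:ℝ):ℂ) n) (pprod r m0 α n) (pprod r m0 ((c⁻¹:ℝ):ℂ) k)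
          (pprod r m0 α k) hu (hα1 _ hm1) (hA n) (hA k) hca huv
      · have : k = n + 1 := by omega
        subst this
        simp

/-- **Lemma `lem:terms_in_A_k_n`**: (a) if `cα ≠ 1` then
`G_{k,n} = ((1-α)/(cα-1)) (F_{k+1,n}(c⁻¹) - F_{k+1,n}(α))` exactly; (b) if `cα = 1` then
`G_{k,n} = (1-c⁻¹) F_{k+1,n}(c⁻¹) ln(n/k) + O(n⁻¹)`, uniformly over `m₀-1 ≤ k ≤ n-1`. -/
theorem Gterm_formula
    (c : ℝ) (hc : 0 < c) (r : ℕ → ℝ) (hr0 : ∀ n, 0 ≤ r n) (hr1 : ∀ n, r n < 1)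
    (hrO : (fun n : ℕ => (n : ℝ) * r n - c) =O[Filter.atTop] fun n : ℕ => (n : ℝ)⁻¹)
    (α : ℂ) (hα : 0 < α.re)
    (m0 : ℕ) (hm0 : 2 ≤ m0)
    (hm : ∀ m, m0 ≤ m → α.re * r m < 1 ∧ c⁻¹ * r m < 1) :
    ((c : ℂ) * α ≠ 1 →
      ∀ k n : ℕ, m0 - 1 ≤ k → k + 1 ≤ n →
        Gterm r m0 c α k n =
          ((1 - α) / ((c : ℂ) * α - 1)) *
            (pprod r m0 ((c⁻¹ : ℝ) : ℂ) n / pprod r m0 ((c⁻¹ : ℝ) : ℂ) k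
              - pprod r m0 α n / pprod r m0 α k)) ∧
    ((c : ℂ) * α = 1 →
      ∃ C : ℝ, ∀ᶠ n : ℕ in Filter.atTop, ∀ k : ℕ, m0 - 1 ≤ k → k + 1 ≤ n →
        ‖(Gterm r m0 c α k n
            - (1 - ((c⁻¹ : ℝ) : ℂ)) *
                (pprod r m0 ((c⁻¹ : ℝ) : ℂ) n / pprod r m0 ((c⁻¹ : ℝ) : ℂ) k) *
                (Real.log ((n : ℝ) / k) : ℂ))‖
          ≤ C / n) := by
  -- nonvanishing
  have hA : ∀ n, pprod r m0 α n ≠ 0 := by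
    refine fun n => pprod_ne_zero r m0 α (fun m hmm => ?_) n
    have := (hm m hmm).1
    simp only [Complex.sub_re, Complex.one_re, Complex.mul_re, Complex.ofReal_re,
      Complex.ofReal_im, mul_zero, sub_zero]
    linarith
  have hC : ∀ n, pprod r m0 ((c⁻¹:ℝ):ℂ) n ≠ 0 := by
    refine fun n => pprod_ne_zero r m0 _ (fun m hmm => ?_) n
    have := (hm m hmm).2
    simp only [Complex.sub_re, Complex.one_re, Complex.mul_re, Complex.ofReal_re,
      Complex.ofReal_im, mul_zero, sub_zero, zero_mul]
    linarith
  have hx : ∀ l, m0 ≤ l → (1:ℂ) - ((r l * c⁻¹:ℝ):ℂ) ≠ 0 := by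
    intro l hl
    have h2 : r l * c⁻¹ < 1 := by have := (hm l hl).2; linarith [mul_comm (r l) c⁻¹]
    have : ((1 - (r l * c⁻¹) : ℝ) : ℂ) ≠ 0 := by
      rw [Complex.ofReal_ne_zero]; linarith
    simpa using this
  have hα1 : ∀ l, m0 ≤ l → (1:ℂ) - α * (r l : ℂ) ≠ 0 := by
    intro l hl
    intro h
    have h2 := (hm l hl).1
    have : ((1:ℂ) - α * (r l : ℂ)).re = 0 := by rw [h]; simp
    simp only [Complex.sub_re, Complex.one_re, Complex.mul_re, Complex.ofReal_re,
      Complex.ofReal_im, mul_zero, sub_zero] at this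
    linarith
  constructor
  · -- part (a)
    intro hca k n hk hkn
    have hca' : (c:ℂ)*α - 1 ≠ 0 := sub_ne_zero.mpr hca
    rw [Gterm, telescope r c (ne_of_gt hc) α hca' m0 hA hx hα1 k (by omega) n (by omega)]
    have key : ∀ w s A B Ck Cn : ℂ, w ≠ 0 → A ≠ 0 → B ≠ 0 → Ck ≠ 0 →
        s * (A / Ck) * (w⁻¹ * (Cn/A - Ck/B)) = (s/w) * (Cn/Ck - A/B) := by
      intro w s A B Ck Cn hw hA hB hCk
      field_simp
    exact key _ _ _ _ _ _ hca' (hA n) (hA k) (hC k)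
  · -- part (b)
    intro hca
    have hc0 : (c:ℂ) ≠ 0 := Complex.ofReal_ne_zero.mpr (ne_of_gt hc)
    have hαeq : α = ((c⁻¹:ℝ):ℂ) := by
      rw [Complex.ofReal_inv]
      field_simp
      linear_combination hca
    subst hαeq
    -- real products
    set Q : ℕ → ℝ := fun n => ∏ m ∈ Finset.Icc m0 n, (1 - c⁻¹ * r m) with hQdef
    have hQpos : ∀ n, 0 < Q n := fun n =>
      Finset.prod_pos fun m hmm => by
        have := (hm m (Finset.mem_Icc.mp hmm).1).2
        linarith
    have hpreal : ∀ n, pprod r m0 ((c⁻¹:ℝ):ℂ) n = ((Q n : ℝ) : ℂ) := by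
      intro n
      rw [hQdef]
      unfold pprod
      push_cast
      rfl
    -- Gterm is real
    have hGreal : ∀ k n : ℕ, Gterm r m0 c ((c⁻¹:ℝ):ℂ) k n
        = (((1 - c⁻¹) * (Q n / Q k) *
            ∑ l ∈ Finset.Icc (k+1) n, (c⁻¹ * r l)/(1 - c⁻¹ * r l) : ℝ) : ℂ) := by
      intro k n
      unfold Gterm
      rw [hpreal, hpreal]
      have hsum : ∑ l ∈ Finset.Icc (k + 1) n,
          ((r l * c⁻¹ : ℝ) : ℂ) / (1 - ((r l * c⁻¹ : ℝ) : ℂ)) *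
            (pprod r m0 ((c⁻¹ : ℝ) : ℂ) l / pprod r m0 ((c⁻¹:ℝ):ℂ) l)
          = ((∑ l ∈ Finset.Icc (k+1) n, (c⁻¹ * r l)/(1 - c⁻¹ * r l) : ℝ) : ℂ) := by
        rw [Complex.ofReal_sum]
        apply Finset.sum_congr rfl
        intro l _
        rw [div_self (hC l), mul_one]
        have hcomm : c⁻¹ * r l = r l * c⁻¹ := mul_comm _ _
        rw [hcomm]
        push_cast
        ring
      rw [hsum]
      push_cast
      ring
    -- invoke the real estimate
    obtain ⟨C, hC'⟩ := real_main c hc r hr0 hrO m0 hm0 (fun m hm' => (hm m hm').2)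
    refine ⟨C, ?_⟩
    filter_upwards [hC'] with n hn k hk hkn
    have hb := hn k hk hkn
    have hdiff : Gterm r m0 c ((c⁻¹:ℝ):ℂ) k n
        - (1 - ((c⁻¹ : ℝ) : ℂ)) *
            (pprod r m0 ((c⁻¹ : ℝ) : ℂ) n / pprod r m0 ((c⁻¹ : ℝ) : ℂ) k) *
            (Real.log ((n : ℝ) / k) : ℂ)
        = (((1 - c⁻¹) * (Q n / Q k) *
            ((∑ l ∈ Finset.Icc (k+1) n, (c⁻¹ * r l)/(1 - c⁻¹ * r l))
              - Real.log ((n:ℝ)/k)) : ℝ) : ℂ) := by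
      rw [hGreal, hpreal, hpreal]
      push_cast
      ring
    rw [hdiff, Complex.norm_real, Real.norm_eq_abs]
    exact hb

end
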